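/- Let d ≥ 1, n ≥ 1 and let a_1, …, a_n ∈ ℕ^d \ {0} generate an additive submonoid Γ of ℕ^d with the property that for every m ∈ ℕ^d there exists an integer k ≥ 1 with k•m ∈ Γ. In R = ℂ[[x_1,…,x_d,y_1,…,y_d]] let I_Δ be the ideal generated by x^{a_1} − y^{a_1}, …, x^{a_n} − y^{a_n}, and define Γ^s = { α ∈ ℕ^d : x^α − y^α is integral over I_Δ }. Then Γ^s is an additive submonoid of ℕ^d containing Γ, and Γ^s is finitely generated. -/

import Mathlib

open Polynomial

/-- An element `f` of a commutative ring is *integral over the ideal* `I` if it satisfies an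
equation `f ^ m + a 1 * f ^ (m-1) + ⋯ + a (m-1) * f + a m = 0` with `a j ∈ I ^ j`. -/
def IsIntegralOverIdeal {R : Type*} [CommRing R] (I : Ideal R) (f : R) : Prop :=
  ∃ m : ℕ, 0 < m ∧ ∃ a : ℕ → R, (∀ j, 1 ≤ j → j ≤ m → a j ∈ I ^ j) ∧
    f ^ m + ∑ j ∈ Finset.Icc 1 m, a j * f ^ (m - j) = 0

/-- The monomial `x ^ α` in `ℂ[[x_1,…,x_d,y_1,…,y_d]]`, the `x`-variables being indexed by
the left summand of `Fin d ⊕ Fin d`. -/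
noncomputable def Xmon (d : ℕ) (α : Fin d →₀ ℕ) : MvPowerSeries (Fin d ⊕ Fin d) ℂ :=
  MvPowerSeries.monomial (α.embDomain (Function.Embedding.inl)) 1

/-- The monomial `y ^ α` in `ℂ[[x_1,…,x_d,y_1,…,y_d]]`. -/
noncomputable def Ymon (d : ℕ) (α : Fin d →₀ ℕ) : MvPowerSeries (Fin d ⊕ Fin d) ℂ :=
  MvPowerSeries.monomial (α.embDomain (Function.Embedding.inr)) 1

section IntegralOverIdeal

variable {R : Type*} [CommRing R] {I : Ideal R} {f g : R}

lemma C_mem_reesAlgebra (r : R) : Polynomial.C r ∈ reesAlgebra I := by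
  rw [mem_reesAlgebra_iff]
  intro i
  rcases Nat.eq_zero_or_pos i with h | h
  · simp [h]
  · simp [Polynomial.coeff_C, Nat.pos_iff_ne_zero.1 h]

lemma isIntegralOverIdeal_iff [Nontrivial R] :
    IsIntegralOverIdeal I f ↔ IsIntegral (reesAlgebra I) (Polynomial.C f * Polynomial.X) := by
  constructor
  · rintro ⟨m, hm, a, haI, heq⟩
    classical
    set b : ℕ → R := fun j => if 1 ≤ j ∧ j ≤ m then a j else 0 with hb
    have hbI : ∀ j, b j ∈ I ^ j := by
      intro j
      by_cases hj : 1 ≤ j ∧ j ≤ m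
      · simpa [hb, hj] using haI j hj.1 hj.2
      · simp [hb, hj]
    have heq' : f ^ m + ∑ j ∈ Finset.Icc 1 m, b j * f ^ (m - j) = 0 := by
      rw [← heq]
      congr 1
      refine Finset.sum_congr rfl fun j hj => ?_
      rw [Finset.mem_Icc] at hj
      simp [hb, hj.1, hj.2]
    refine ⟨Polynomial.X ^ m + ∑ j ∈ Finset.Icc 1 m,
      Polynomial.C (⟨Polynomial.C (b j) * Polynomial.X ^ j, by
        rw [Polynomial.C_mul_X_pow_eq_monomial]
        exact reesAlgebra.monomial_mem.mpr (hbI j)⟩ : reesAlgebra I)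
        * Polynomial.X ^ (m - j), ?_, ?_⟩
    · apply Polynomial.monic_X_pow_add
      refine lt_of_le_of_lt (Polynomial.degree_sum_le _ _) ?_
      rw [Finset.sup_lt_iff (by exact_mod_cast WithBot.bot_lt_coe m)]
      intro j hj
      rw [Finset.mem_Icc] at hj
      refine lt_of_le_of_lt (Polynomial.degree_mul_le _ _) ?_
      calc (Polynomial.C _).degree + (Polynomial.X ^ (m - j) : Polynomial (reesAlgebra I)).degree
          ≤ 0 + (Polynomial.X ^ (m - j) : Polynomial (reesAlgebra I)).degree :=
            add_le_add Polynomial.degree_C_le le_rfl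
        _ = ((m - j : ℕ) : WithBot ℕ) := by rw [Polynomial.degree_X_pow, zero_add]
        _ < (m : WithBot ℕ) := by exact_mod_cast Nat.sub_lt hm hj.1
    · show Polynomial.eval₂ _ _ _ = 0
      rw [Polynomial.eval₂_add, Polynomial.eval₂_pow, Polynomial.eval₂_finset_sum]
      simp only [Polynomial.eval₂_mul, Polynomial.eval₂_pow, Polynomial.eval₂_C,
        Polynomial.eval₂_X]
      have hterm : ∀ j ∈ Finset.Icc 1 m,
          algebraMap (reesAlgebra I) R[X]
              (⟨Polynomial.C (b j) * Polynomial.X ^ j, by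
                rw [Polynomial.C_mul_X_pow_eq_monomial]
                exact reesAlgebra.monomial_mem.mpr (hbI j)⟩ : reesAlgebra I) *
            (Polynomial.C f * Polynomial.X) ^ (m - j)
          = Polynomial.C (b j * f ^ (m - j)) * Polynomial.X ^ m := by
        intro j hj
        rw [Finset.mem_Icc] at hj
        show Polynomial.C (b j) * Polynomial.X ^ j * (Polynomial.C f * Polynomial.X) ^ (m - j) = _
        calc Polynomial.C (b j) * Polynomial.X ^ j *
              (Polynomial.C f * Polynomial.X) ^ (m - j)
            = (Polynomial.C (b j) * Polynomial.C (f ^ (m - j))) *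
              (Polynomial.X ^ j * Polynomial.X ^ (m - j)) := by
              rw [mul_pow, ← Polynomial.C_pow]; ring
          _ = Polynomial.C (b j * f ^ (m - j)) * Polynomial.X ^ m := by
              rw [← Polynomial.C_mul, ← pow_add, Nat.add_sub_cancel' hj.2]
      rw [Finset.sum_congr rfl hterm, ← Finset.sum_mul, mul_pow, ← Polynomial.C_pow,
        ← map_sum, ← add_mul, ← Polynomial.C_add, heq', Polynomial.C_0, zero_mul]
  · rintro ⟨p, pmonic, hp⟩
    set φ := algebraMap (reesAlgebra I) R[X] with hφ
    set p' := p.map φ with hp'def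
    have hmono : p'.Monic := pmonic.map φ
    set m := p.natDegree with hmdef
    have hm : 0 < m := by
      rcases Nat.eq_zero_or_pos m with h | h
      · exfalso
        have : p = 1 := pmonic.natDegree_eq_zero.1 h
        rw [this] at hp
        simp at hp
      · exact h
    have hdeg' : p'.natDegree = m := pmonic.natDegree_map φ
    have heval : p'.eval (Polynomial.C f * Polynomial.X) = 0 := by
      rw [hp'def, Polynomial.eval_map]
      exact hp
    have hsum : ∑ k ∈ Finset.range (m + 1),
        (p'.coeff k).coeff (m - k) * f ^ k = 0 := by
      have h0 : (0 : R[X]).coeff m = 0 := rfl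
      rw [Polynomial.eval_eq_sum_range, hdeg'] at heval
      have := congrArg (fun q : R[X] => q.coeff m) heval
      simp only [Polynomial.finset_sum_coeff, h0] at this
      rw [← this]
      refine Finset.sum_congr rfl fun k hk => ?_
      rw [Finset.mem_range] at hk
      have hk' : k ≤ m := Nat.lt_succ_iff.1 hk
      rw [mul_pow, ← Polynomial.C_pow, ← mul_assoc, Polynomial.coeff_mul_X_pow',
        if_pos hk', Polynomial.coeff_mul_C]
    refine ⟨m, hm, fun j => (p'.coeff (m - j)).coeff j, fun j hj1 hjm => ?_, ?_⟩
    · have : p'.coeff (m - j) ∈ reesAlgebra I := by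
        rw [hp'def, Polynomial.coeff_map]
        exact (p.coeff (m - j)).2
      exact (mem_reesAlgebra_iff I _).1 this j
    · have hlead : (p'.coeff m).coeff 0 = 1 := by
        have : p'.coeff m = 1 := by
          have := hmono.leadingCoeff
          rwa [Polynomial.leadingCoeff, hdeg'] at this
        rw [this, Polynomial.coeff_one]
        simp
      rw [Finset.sum_range_succ, Nat.sub_self, hlead, one_mul] at hsum
      rw [← hsum]
      rw [add_comm]
      congr 1
      refine Finset.sum_nbij' (fun j => m - j) (fun k => m - k) ?_ ?_ ?_ ?_ ?_ <;>
        intro j hj <;>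
        simp only [Finset.mem_Icc, Finset.mem_range] at hj ⊢ <;>
        try omega
      have h1 : m - (m - j) = j := by omega
      rw [h1]


lemma isIntegralOverIdeal_zero : IsIntegralOverIdeal I 0 :=
  ⟨1, one_pos, fun _ => 0, by simp, by simp⟩

lemma isIntegralOverIdeal_of_mem (h : f ∈ I) : IsIntegralOverIdeal I f := by
  refine ⟨1, one_pos, fun _ => -f, fun j hj1 hj2 => ?_, by simp⟩
  obtain rfl : j = 1 := le_antisymm hj2 hj1
  simpa using I.neg_mem h

lemma IsIntegralOverIdeal.mul_left [Nontrivial R] (r : R) (h : IsIntegralOverIdeal I f) :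
    IsIntegralOverIdeal I (r * f) := by
  rw [isIntegralOverIdeal_iff] at h ⊢
  have hr : IsIntegral (reesAlgebra I)
      (((⟨Polynomial.C r, C_mem_reesAlgebra r⟩ : reesAlgebra I) : R[X])) :=
    isIntegral_algebraMap (x := (⟨Polynomial.C r, C_mem_reesAlgebra r⟩ : reesAlgebra I))
  have : Polynomial.C (r * f) * Polynomial.X =
      ((⟨Polynomial.C r, C_mem_reesAlgebra r⟩ : reesAlgebra I) : R[X]) *
        (Polynomial.C f * Polynomial.X) := by
    show Polynomial.C (r * f) * Polynomial.X =
      Polynomial.C r * (Polynomial.C f * Polynomial.X)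
    rw [Polynomial.C_mul, mul_assoc]
  rw [this]
  exact hr.mul h

lemma IsIntegralOverIdeal.add [Nontrivial R] (hf : IsIntegralOverIdeal I f)
    (hg : IsIntegralOverIdeal I g) : IsIntegralOverIdeal I (f + g) := by
  rw [isIntegralOverIdeal_iff] at hf hg ⊢
  have : Polynomial.C (f + g) * Polynomial.X =
      Polynomial.C f * Polynomial.X + Polynomial.C g * Polynomial.X := by
    rw [Polynomial.C_add, add_mul]
  rw [this]
  exact hf.add hg

end IntegralOverIdeal

lemma fg_of_smul_single {d : ℕ} (S : AddSubmonoid (Fin d →₀ ℕ)) (N : ℕ) (hN : 0 < N)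
    (h : ∀ i : Fin d, (N • Finsupp.single i (1:ℕ)) ∈ S) : S.FG := by
  classical
  set P : (Fin d →₀ ℕ) → (Fin d →₀ ℕ) → Prop :=
    fun s t => s ≤ t ∧ ∀ i, s i % N = t i % N with hP
  set Min : Set (Fin d →₀ ℕ) :=
    {s | s ∈ S ∧ s ≠ 0 ∧ ∀ t ∈ S, t ≠ 0 → P t s → t = s} with hMin
  set E : Set (Fin d →₀ ℕ) := Set.range (fun i : Fin d => N • Finsupp.single i (1:ℕ)) with hE
  set deg : (Fin d →₀ ℕ) → ℕ := fun s => ∑ i, s i with hdeg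
  -- Min is finite
  have hMinFin : Min.Finite := by
    by_contra hinf
    have hinf : Min.Infinite := hinf
    set ρ : (Fin d →₀ ℕ) → (Fin d → Fin N) :=
      fun s i => ⟨s i % N, Nat.mod_lt _ hN⟩ with hρ
    have : ∃ r : Fin d → Fin N, {s ∈ Min | ρ s = r}.Infinite := by
      by_contra hall
      push_neg at hall
      have hsub : Min ⊆ ⋃ r ∈ (Finset.univ : Finset (Fin d → Fin N)), {s ∈ Min | ρ s = r} := by
        intro s hs
        exact Set.mem_biUnion (Finset.mem_univ (ρ s)) ⟨hs, rfl⟩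
      exact hinf (((Finset.univ : Finset (Fin d → Fin N)).finite_toSet.biUnion
        fun r _ => hall r).subset hsub)
    obtain ⟨r, hr⟩ := this
    set u := hr.natEmbedding
    have hpwo : (Set.univ : Set (Fin d → ℕ)).IsPWO :=
      by simpa using (Set.IsPWO.pi (ι := Fin d) (α := fun _ => ℕ) (s := fun _ => Set.univ)
        (fun _ => Set.isPWO_of_wellQuasiOrderedLE _))
    obtain ⟨m, n, hmn, hle⟩ := Set.partiallyWellOrderedOn_iff_exists_lt.1 hpwo
      (fun k => ⇑((u k : Fin d →₀ ℕ))) (fun k => Set.mem_univ _)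
    have hum := (u m).2
    have hun := (u n).2
    have hPle : P (u m : Fin d →₀ ℕ) (u n : Fin d →₀ ℕ) := by
      refine ⟨Finsupp.le_def.2 fun i => hle i, fun i => ?_⟩
      have h1 : ρ (u m : Fin d →₀ ℕ) = r := hum.2
      have h2 : ρ (u n : Fin d →₀ ℕ) = r := hun.2
      have := congrArg (fun f => (f i : ℕ)) (h1.trans h2.symm)
      simpa [hρ] using this
    have heq : (u m : Fin d →₀ ℕ) = (u n : Fin d →₀ ℕ) :=
      hun.1.2.2 _ hum.1.1 hum.1.2.1 hPle
    exact absurd (u.injective (Subtype.ext heq)) (Nat.ne_of_lt hmn)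
  -- every nonzero element of S dominates a minimal one
  have key : ∀ k : ℕ, ∀ s, s ∈ S → s ≠ 0 → deg s ≤ k → ∃ m ∈ Min, P m s := by
    intro k
    induction k using Nat.strong_induction_on with
    | _ k ih =>
      intro s hs hs0 hdegs
      by_cases hmin : ∀ t ∈ S, t ≠ 0 → P t s → t = s
      · exact ⟨s, ⟨hs, hs0, hmin⟩, le_refl s, fun i => rfl⟩
      · push_neg at hmin
        obtain ⟨t, htS, ht0, hPts, htne⟩ := hmin
        have hdlt : deg t < deg s := by
          have hle : ∀ i, t i ≤ s i := fun i => Finsupp.le_def.1 hPts.1 i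
          have hex : ∃ i, t i ≠ s i := by
            by_contra hc
            push_neg at hc
            exact htne (Finsupp.ext hc)
          obtain ⟨i, hi⟩ := hex
          exact Finset.sum_lt_sum (fun j _ => hle j)
            ⟨i, Finset.mem_univ i, lt_of_le_of_ne (hle i) hi⟩
        obtain ⟨m, hm, hPmt⟩ := ih (deg t) (lt_of_lt_of_le hdlt hdegs) t htS ht0 le_rfl
        exact ⟨m, hm, hPmt.1.trans hPts.1, fun i => (hPmt.2 i).trans (hPts.2 i)⟩
  -- conclude
  refine (AddSubmonoid.fg_iff S).2 ⟨Min ∪ E, ?_, hMinFin.union (Set.finite_range _)⟩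
  apply le_antisymm
  · rw [AddSubmonoid.closure_le]
    rintro s (hs | ⟨i, rfl⟩)
    · exact hs.1
    · exact h i
  · intro s hs
    by_cases hs0 : s = 0
    · simp [hs0, AddSubmonoid.zero_mem]
    · obtain ⟨m, hm, hPms⟩ := key (deg s) s hs hs0 le_rfl
      have hrepr : s = m + (s - m) := (add_tsub_cancel_of_le hPms.1).symm
      rw [hrepr]
      refine AddSubmonoid.add_mem _
        (AddSubmonoid.subset_closure (Set.mem_union_left _ hm)) ?_
      have hdiff : (s - m) = ∑ i : Fin d, ((s i - m i) / N) • (N • Finsupp.single i (1:ℕ)) := by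
        ext j
        rw [Finsupp.tsub_apply, Finsupp.finset_sum_apply]
        have hdvd : N ∣ s j - m j := by
          have hmod : m j % N = s j % N := hPms.2 j
          have hlej : m j ≤ s j := Finsupp.le_def.1 hPms.1 j
          exact (Nat.modEq_iff_dvd' hlej).1 hmod
        rw [Finset.sum_eq_single j]
        · simp only [Finsupp.smul_apply, Finsupp.single_eq_same, smul_eq_mul, mul_one]
          exact (Nat.div_mul_cancel hdvd).symm
        · intro b _ hb
          simp [Finsupp.single_apply, hb]
        · intro hj; exact absurd (Finset.mem_univ j) hj
      rw [hdiff]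
      refine AddSubmonoid.sum_mem _ fun i _ => ?_
      exact (AddSubmonoid.closure _).nsmul_mem
        (AddSubmonoid.subset_closure (Set.mem_union_right _ (Set.mem_range_self i))) _


lemma Xmon_add (d : ℕ) (α β : Fin d →₀ ℕ) : Xmon d (α + β) = Xmon d α * Xmon d β := by
  unfold Xmon
  rw [MvPowerSeries.monomial_mul_monomial, Finsupp.embDomain_add, one_mul]

lemma Ymon_add (d : ℕ) (α β : Fin d →₀ ℕ) : Ymon d (α + β) = Ymon d α * Ymon d β := by
  unfold Ymon
  rw [MvPowerSeries.monomial_mul_monomial, Finsupp.embDomain_add, one_mul]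

/-- Let `Γ ⊆ ℕ^d` be the submonoid generated by `a_1, …, a_n ∈ ℕ^d \ {0}`, and suppose every
`m ∈ ℕ^d` has a multiple `k • m ∈ Γ` with `k ≥ 1` (smooth normalization).  Let
`I_Δ = ⟨x^{a_i} - y^{a_i} : 1 ≤ i ≤ n⟩` in `ℂ[[x_1,…,x_d,y_1,…,y_d]]`.  Then
`Γ^s = { α : x^α - y^α is integral over I_Δ }` is a submonoid of `ℕ^d` containing `Γ`,
and `Γ^s` is finitely generated. -/
theorem saturation_semigroup_fg (d n : ℕ) (hd : 1 ≤ d) (hn : 1 ≤ n)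
    (a : Fin n → (Fin d →₀ ℕ)) (ha : ∀ i, a i ≠ 0)
    (hsat : ∀ m : Fin d →₀ ℕ, ∃ k : ℕ, 1 ≤ k ∧
      k • m ∈ AddSubmonoid.closure (Set.range a))
    (IΔ : Ideal (MvPowerSeries (Fin d ⊕ Fin d) ℂ))
    (hIΔ : IΔ = Ideal.span (Set.range fun i => Xmon d (a i) - Ymon d (a i))) :
    ∃ Γs : AddSubmonoid (Fin d →₀ ℕ),
      (↑Γs = {α : Fin d →₀ ℕ | IsIntegralOverIdeal IΔ (Xmon d α - Ymon d α)}) ∧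
      AddSubmonoid.closure (Set.range a) ≤ Γs ∧ Γs.FG := by
  refine ⟨{
    carrier := {α : Fin d →₀ ℕ | IsIntegralOverIdeal IΔ (Xmon d α - Ymon d α)}
    zero_mem' := by
      have h0 : Xmon d 0 - Ymon d 0 = 0 := by
        unfold Xmon Ymon
        rw [Finsupp.embDomain_zero, Finsupp.embDomain_zero, sub_self]
      simp only [Set.mem_setOf_eq, h0]
      exact isIntegralOverIdeal_zero
    add_mem' := by
      intro α β hα hβ
      simp only [Set.mem_setOf_eq] at hα hβ ⊢
      have hid : Xmon d (α + β) - Ymon d (α + β) =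
          Xmon d α * (Xmon d β - Ymon d β) + Ymon d β * (Xmon d α - Ymon d α) := by
        rw [Xmon_add, Ymon_add]
        ring
      rw [hid]
      exact ((hβ.mul_left (Xmon d α))).add (hα.mul_left (Ymon d β)) }, rfl, ?_, ?_⟩
  · rw [AddSubmonoid.closure_le]
    rintro _ ⟨i, rfl⟩
    show IsIntegralOverIdeal IΔ (Xmon d (a i) - Ymon d (a i))
    apply isIntegralOverIdeal_of_mem
    rw [hIΔ]
    exact Ideal.subset_span ⟨i, rfl⟩
  · -- finite generation
    set Γs : AddSubmonoid (Fin d →₀ ℕ) := {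
      carrier := {α : Fin d →₀ ℕ | IsIntegralOverIdeal IΔ (Xmon d α - Ymon d α)}
      zero_mem' := by
        have h0 : Xmon d 0 - Ymon d 0 = 0 := by
          unfold Xmon Ymon
          rw [Finsupp.embDomain_zero, Finsupp.embDomain_zero, sub_self]
        simp only [Set.mem_setOf_eq, h0]
        exact isIntegralOverIdeal_zero
      add_mem' := by
        intro α β hα hβ
        simp only [Set.mem_setOf_eq] at hα hβ ⊢
        have hid : Xmon d (α + β) - Ymon d (α + β) =
            Xmon d α * (Xmon d β - Ymon d β) + Ymon d β * (Xmon d α - Ymon d α) := by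
          rw [Xmon_add, Ymon_add]
          ring
        rw [hid]
        exact ((hβ.mul_left (Xmon d α))).add (hα.mul_left (Ymon d β)) }
    have hΓ : AddSubmonoid.closure (Set.range a) ≤ Γs := by
      rw [AddSubmonoid.closure_le]
      rintro _ ⟨i, rfl⟩
      show IsIntegralOverIdeal IΔ (Xmon d (a i) - Ymon d (a i))
      apply isIntegralOverIdeal_of_mem
      rw [hIΔ]
      exact Ideal.subset_span ⟨i, rfl⟩
    choose k hk1 hk2 using fun i : Fin d => hsat (Finsupp.single i 1)
    classical
    set N : ℕ := ∏ i : Fin d, k i with hN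
    have hNpos : 0 < N := Finset.prod_pos fun i _ => hk1 i
    apply fg_of_smul_single Γs N hNpos
    intro i
    have h1 : k i • Finsupp.single i (1:ℕ) ∈ Γs := hΓ (hk2 i)
    have h2 : N • Finsupp.single i (1:ℕ) =
        (∏ j ∈ Finset.univ.erase i, k j) • (k i • Finsupp.single i (1:ℕ)) := by
      rw [← mul_smul, Finset.prod_erase_mul Finset.univ k (Finset.mem_univ i)]
    rw [h2]
    exact Γs.nsmul_mem h1 _
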